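/- Let M be an (n,k,r)-MR matroid and let k' satisfy r < k' < k. Then M contains a minor isomorphic to the uniform matroid U_{n'}^{k'} with n' = n − g − k + k', where g = n/(r+1). -/

import Mathlib

/-- The matroid of an `(n,k,r)` maximally recoverable LRC: the ground set `E` is
partitioned into `g` repair sets of size `r+1`, and the rank function is
`ρ(A) = min(k, |A| − #{i : Rᵢ ⊆ A})` (with `k ≤ g·r`). -/
structure MRMatroid (α : Type*) [DecidableEq α] where
  k : ℕ
  r : ℕ
  g : ℕ
  E : Finset α
  R : Fin g → Finset α
  hdisj : ∀ i j, i ≠ j → Disjoint (R i) (R j)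
  hcover : E = Finset.univ.biUnion R
  hcardR : ∀ i, (R i).card = r + 1
  hk : 0 < k
  hr : 0 < r
  hkgr : k ≤ g * r

/-- The rank function of an MR matroid: `ρ(A) = min(k, |A| − #{i : Rᵢ ⊆ A})`. -/
def MRMatroid.rk {α : Type*} [DecidableEq α] (M : MRMatroid α) (A : Finset α) : ℤ :=
  min (M.k : ℤ)
    ((A.card : ℤ) - ((Finset.univ.filter fun i => M.R i ⊆ A).card : ℤ))

/-- `M` has a minor (obtained by restricting to `B` and contracting `A`) which is
isomorphic to the uniform matroid of rank `k'` on `m` elements. -/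
def MRMatroid.HasUniformMinor {α : Type*} [DecidableEq α] (M : MRMatroid α)
    (m k' : ℤ) : Prop :=
  ∃ A B : Finset α, A ⊆ B ∧ B ⊆ M.E ∧ ((B \ A).card : ℤ) = m ∧
    ∀ X ⊆ B \ A, M.rk (X ∪ A) - M.rk A = min k' (X.card : ℤ)

/-- The closure of `X` in the matroid on ground set `E` with rank function `rk`. -/
def clOf {α : Type*} [DecidableEq α] (E : Finset α) (rk : Finset α → ℤ)
    (X : Finset α) : Finset α :=
  E.filter fun e => rk (insert e X) = rk X

/-- `F` is a flat of the matroid on `E` with rank function `rk` if `cl(F) = F`. -/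
def IsFlatOf {α : Type*} [DecidableEq α] (E : Finset α) (rk : Finset α → ℤ)
    (F : Finset α) : Prop :=
  F ⊆ E ∧ clOf E rk F = F

/-- An `(n,k,r)`-MR matroid, for any `r < k' < k`, contains a minor isomorphic to
the uniform matroid `U_{n'}^{k'}` with `n' = n − g − k + k'`. -/
theorem mr_matroid_uniform_minor_large_rank {α : Type*} [DecidableEq α]
    (M : MRMatroid α) (k' : ℕ) (hrk' : M.r < k') (hk'k : k' < M.k) :
    M.HasUniformMinor
      ((M.E.card : ℤ) - (M.g : ℤ) - (M.k : ℤ) + (k' : ℤ)) (k' : ℤ) := by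

  classical
  have hne : ∀ i, (M.R i).Nonempty := fun i => by
    rw [← Finset.card_pos, M.hcardR]; omega
  choose e he using hne
  set B : Finset α := Finset.univ.biUnion (fun i => M.R i \ {e i}) with hB
  have hdisj' : ∀ i j : Fin M.g, i ≠ j → Disjoint (M.R i \ {e i}) (M.R j \ {e j}) :=
    fun i j hij => (M.hdisj i j hij).mono Finset.sdiff_subset Finset.sdiff_subset
  have hBcard : B.card = M.g * M.r := by
    rw [hB, Finset.card_biUnion (fun i _ j _ hij => hdisj' i j hij)]
    have : ∀ i : Fin M.g, (M.R i \ {e i}).card = M.r := by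
      intro i
      rw [Finset.card_sdiff_of_subset (Finset.singleton_subset_iff.2 (he i)), M.hcardR]
      simp
    simp [this, Finset.sum_const, mul_comm]
  have hBE : B ⊆ M.E := by
    rw [M.hcover, hB]
    intro x hx
    rw [Finset.mem_biUnion] at hx ⊢
    obtain ⟨i, hi, hxi⟩ := hx
    exact ⟨i, hi, (Finset.mem_sdiff.mp hxi).1⟩
  have hEcard : M.E.card = M.g * (M.r + 1) := by
    rw [M.hcover, Finset.card_biUnion (fun i _ j _ h => M.hdisj i j h)]
    simp [M.hcardR, Finset.sum_const, mul_comm]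
  have hkgr := M.hkgr
  have hkk' : M.k - k' ≤ B.card := by omega
  obtain ⟨A, hAB, hAcard⟩ := Finset.exists_subset_card_eq hkk'
  have keyfilter : ∀ S ⊆ B, (Finset.univ.filter fun i => M.R i ⊆ S) = ∅ := by
    intro S hS
    rw [Finset.filter_eq_empty_iff]
    intro i _ hsub
    have hmem : e i ∈ B := hS (hsub (he i))
    rw [hB, Finset.mem_biUnion] at hmem
    obtain ⟨j, _, hj⟩ := hmem
    rcases eq_or_ne j i with rfl | hne
    · simp at hj
    · exact absurd (he i)
        (Finset.disjoint_left.mp (M.hdisj j i hne) (Finset.mem_sdiff.mp hj).1)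
  have hrk : ∀ S ⊆ B, M.rk S = min (M.k : ℤ) (S.card : ℤ) := by
    intro S hS
    rw [MRMatroid.rk, keyfilter S hS]
    simp
  refine ⟨A, B, hAB, hBE, ?_, ?_⟩
  · rw [Finset.card_sdiff_of_subset hAB]
    have hAle : A.card ≤ B.card := Finset.card_le_card hAB
    have hE' : M.E.card = B.card + M.g := by rw [hEcard, hBcard]; ring
    push_cast
    omega
  · intro X hX
    have hXB : X ⊆ B := hX.trans Finset.sdiff_subset
    have hXA : Disjoint X A := Finset.disjoint_left.mpr fun a ha =>
      (Finset.mem_sdiff.mp (hX ha)).2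
    have hUB : X ∪ A ⊆ B := Finset.union_subset hXB hAB
    have hcard : (X ∪ A).card = X.card + A.card := Finset.card_union_of_disjoint hXA
    rw [hrk _ hUB, hrk _ hAB, hcard]
    have hk := M.hk
    push_cast
    omega
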